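/- Let A and B be finite families of (nondegenerate closed) line segments in ℝ². Suppose A is λ-low density and B is φ-low density, meaning: for every point x ∈ ℝ² and radius ρ > 0, the number of segments in the family that intersect the closed ball of radius ρ centered at x and have length at least ρ is less than λ (respectively φ). Then the number of pairs (u, v) ∈ A × B with u ∩ v ≠ ∅ is at most φ·|A| + λ·|B|. -/

import Mathlib

noncomputable section

open Classical in
/-- A finite family of segments in the plane (each given by its two endpoints) is
`lam`-low density if, for every point `x` and radius `ρ > 0`, fewer than `lam`
members of the family have length at least `ρ` and meet the closed ball of
radius `ρ` centered at `x`. -/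
def LowDensity (A : Finset (EuclideanSpace ℝ (Fin 2) × EuclideanSpace ℝ (Fin 2)))
    (lam : ℕ) : Prop :=
  ∀ (x : EuclideanSpace ℝ (Fin 2)) (ρ : ℝ), 0 < ρ →
    (A.filter (fun u => ρ ≤ dist u.1 u.2 ∧
      (segment ℝ u.1 u.2 ∩ Metric.closedBall x ρ).Nonempty)).card < lam

open Classical

private lemma seg_subset_ball (a b : EuclideanSpace ℝ (Fin 2)) :
    segment ℝ a b ⊆ Metric.closedBall a (dist a b) := by
  apply (convex_closedBall a (dist a b)).segment_subset
  · simp [dist_nonneg]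
  · simp [Metric.mem_closedBall, dist_comm]

private lemma key_count {C : Finset (EuclideanSpace ℝ (Fin 2) × EuclideanSpace ℝ (Fin 2))}
    {k : ℕ} (hld : LowDensity C k) (c : EuclideanSpace ℝ (Fin 2) × EuclideanSpace ℝ (Fin 2))
    (hc : c.1 ≠ c.2) :
    (C.filter (fun v => dist c.1 c.2 ≤ dist v.1 v.2 ∧
      (segment ℝ v.1 v.2 ∩ segment ℝ c.1 c.2).Nonempty)).card ≤ k := by
  have hρ : 0 < dist c.1 c.2 := dist_pos.2 hc
  refine le_of_lt (lt_of_le_of_lt (Finset.card_le_card ?_) (hld c.1 (dist c.1 c.2) hρ))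
  intro v hv
  rw [Finset.mem_filter] at hv ⊢
  obtain ⟨hvC, hlen, p, hp1, hp2⟩ := hv
  exact ⟨hvC, hlen, p, hp1, seg_subset_ball c.1 c.2 hp2⟩

open Classical in
/-- If `A` is a `λ`-low density family of (nondegenerate closed) segments and `B`
is a `φ`-low density family of segments in the plane, then the number of
intersecting pairs `(u,v) ∈ A × B` is at most `φ·|A| + λ·|B|`. -/
theorem lowDensity_intersections
    (A B : Finset (EuclideanSpace ℝ (Fin 2) × EuclideanSpace ℝ (Fin 2)))
    (hA : ∀ u ∈ A, u.1 ≠ u.2) (hB : ∀ v ∈ B, v.1 ≠ v.2)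
    (lam phi : ℕ) (hAld : LowDensity A lam) (hBld : LowDensity B phi) :
    ((A ×ˢ B).filter (fun uv =>
        (segment ℝ uv.1.1 uv.1.2 ∩ segment ℝ uv.2.1 uv.2.2).Nonempty)).card
      ≤ phi * A.card + lam * B.card := by
  classical
  set S := (A ×ˢ B).filter (fun uv =>
      (segment ℝ uv.1.1 uv.1.2 ∩ segment ℝ uv.2.1 uv.2.2).Nonempty) with hS
  set cond : (EuclideanSpace ℝ (Fin 2) × EuclideanSpace ℝ (Fin 2)) ×
      (EuclideanSpace ℝ (Fin 2) × EuclideanSpace ℝ (Fin 2)) → Prop :=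
    fun uv => dist uv.1.1 uv.1.2 ≤ dist uv.2.1 uv.2.2 with hcond
  have hsplit : S.card = (S.filter cond).card + (S.filter (fun uv => ¬ cond uv)).card :=
    (Finset.card_filter_add_card_filter_not (p := cond) (s := S)).symm
  have hmemS : ∀ uv ∈ S, uv.1 ∈ A ∧ uv.2 ∈ B ∧
      (segment ℝ uv.1.1 uv.1.2 ∩ segment ℝ uv.2.1 uv.2.2).Nonempty := by
    intro uv huv
    rw [hS, Finset.mem_filter, Finset.mem_product] at huv
    exact ⟨huv.1.1, huv.1.2, huv.2⟩
  have h1 : (S.filter cond).card ≤ phi * A.card := by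
    rw [Finset.card_eq_sum_card_fiberwise (f := Prod.fst) (t := A)
      (fun uv huv => (hmemS uv (Finset.filter_subset _ _ huv)).1)]
    calc ∑ a ∈ A, ((S.filter cond).filter (fun uv => uv.1 = a)).card
        ≤ ∑ a ∈ A, phi := by
          refine Finset.sum_le_sum (fun a ha => ?_)
          refine le_trans (Finset.card_le_card_of_injOn Prod.snd ?_ ?_)
            (key_count hBld a (hA a ha))
          · intro uv huv
            rw [Finset.mem_coe, Finset.mem_filter] at huv
            obtain ⟨huv, rfl⟩ := huv
            rw [Finset.mem_filter] at huv
            obtain ⟨hmem, hc⟩ := huv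
            obtain ⟨h1, h2, h3⟩ := hmemS uv hmem
            rw [Finset.mem_coe, Finset.mem_filter]
            refine ⟨h2, hc, ?_⟩
            obtain ⟨p, hp1, hp2⟩ := h3
            exact ⟨p, hp2, hp1⟩
          · intro x hx y hy hxy
            rw [Finset.mem_coe, Finset.mem_filter] at hx hy
            exact Prod.ext (hx.2.trans hy.2.symm) hxy
      _ = phi * A.card := by rw [Finset.sum_const, smul_eq_mul, mul_comm]
  have h2 : (S.filter (fun uv => ¬ cond uv)).card ≤ lam * B.card := by
    rw [Finset.card_eq_sum_card_fiberwise (f := Prod.snd) (t := B)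
      (fun uv huv => (hmemS uv (Finset.filter_subset _ _ huv)).2.1)]
    calc ∑ b ∈ B, ((S.filter (fun uv => ¬ cond uv)).filter (fun uv => uv.2 = b)).card
        ≤ ∑ b ∈ B, lam := by
          refine Finset.sum_le_sum (fun b hb => ?_)
          refine le_trans (Finset.card_le_card_of_injOn Prod.fst ?_ ?_)
            (key_count hAld b (hB b hb))
          · intro uv huv
            rw [Finset.mem_coe, Finset.mem_filter] at huv
            obtain ⟨huv, rfl⟩ := huv
            rw [Finset.mem_filter] at huv
            obtain ⟨hmem, hc⟩ := huv
            obtain ⟨h1, h2, h3⟩ := hmemS uv hmem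
            rw [Finset.mem_coe, Finset.mem_filter]
            rw [hcond] at hc
            exact ⟨h1, le_of_lt (not_le.mp hc), h3⟩
          · intro x hx y hy hxy
            rw [Finset.mem_coe, Finset.mem_filter] at hx hy
            exact Prod.ext hxy (hx.2.trans hy.2.symm)
      _ = lam * B.card := by rw [Finset.sum_const, smul_eq_mul, mul_comm]
  rw [hsplit]
  exact Nat.add_le_add h1 h2
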